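/- Let 𝒞 and 𝒟 be abelian categories and let L : 𝒟 → 𝒞 be left adjoint to Γ : 𝒞 → 𝒟. Assume: (1) Γ is exact; (2) the unit Id_𝒟 → Γ∘L is an isomorphism; (3) Γ reflects zero objects, i.e. Γ(M) ≅ 0 implies M ≅ 0. Then the counit L∘Γ → Id_𝒞 is an isomorphism, and hence L and Γ are mutually inverse equivalences of categories. -/
import Mathlib

open CategoryTheory CategoryTheory.Limits

universe v₁ v₂ u₁ u₂

/-- Let `𝒞` and `𝒟` be abelian categories and `L : 𝒟 ⥤ 𝒞` left adjoint to
`Γ : 𝒞 ⥤ 𝒟` (an adjoint pair of additive functors).  Assume: (1) `Γ` is exact;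
(2) the unit `Id → Γ∘L` is an isomorphism; (3) `Γ` reflects zero objects.  Then the
counit `L∘Γ → Id` is an isomorphism, and `L` and `Γ` are mutually inverse equivalences
of categories. -/
theorem adjoint_equivalence_of_exact_unit_iso_reflects_zero
    (C : Type u₁) [Category.{v₁} C] [Abelian C]
    (D : Type u₂) [Category.{v₂} D] [Abelian D]
    (L : D ⥤ C) (Γ : C ⥤ D) [L.Additive] [Γ.Additive]
    (adj : L ⊣ Γ)
    [PreservesFiniteLimits Γ] [PreservesFiniteColimits Γ]
    (hunit : IsIso adj.unit)
    (hzero : ∀ X : C, IsZero (Γ.obj X) → IsZero X) :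
    IsIso adj.counit ∧ L.IsEquivalence ∧ Γ.IsEquivalence := by
  have happ : ∀ X : C, IsIso (adj.counit.app X) := by
    intro X
    set f := adj.counit.app X with hf
    haveI := hunit
    have hΓf : IsIso (Γ.map f) := by
      haveI : IsIso (𝟙 (Γ.obj X)) := inferInstance
      have htri : adj.unit.app (Γ.obj X) ≫ Γ.map f = 𝟙 (Γ.obj X) :=
        adj.right_triangle_components X
      exact IsIso.of_isIso_fac_left htri
    have hmono : Mono f := by
      apply Abelian.mono_of_kernel_ι_eq_zero
      have hker : IsZero (Γ.obj (kernel f)) :=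
        (isZero_zero D).of_iso ((PreservesKernel.iso Γ f).trans (kernel.ofMono (Γ.map f)))
      have : IsZero (kernel f) := hzero _ hker
      exact this.eq_of_src _ _
    have hepi : Epi f := by
      apply Abelian.epi_of_cokernel_π_eq_zero
      have hcoker : IsZero (Γ.obj (cokernel f)) :=
        (isZero_zero D).of_iso ((PreservesCokernel.iso Γ f).trans (cokernel.ofEpi (Γ.map f)))
      have : IsZero (cokernel f) := hzero _ hcoker
      exact this.eq_of_tgt _ _
    exact isIso_of_mono_of_epi f
  have hcounit : IsIso adj.counit := NatIso.isIso_of_isIso_app adj.counit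
  haveI := hunit
  haveI : ∀ X, IsIso (adj.counit.app X) := happ
  exact ⟨hcounit, adj.toEquivalence.isEquivalence_functor,
    adj.toEquivalence.isEquivalence_inverse⟩
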